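/- Let X be an (nT)×(MT) matrix, β*, β̂ ∈ ℝ^{MT}, W ∈ ℝ^{nT}, y = Xβ* + W, and λ > 0. Suppose β̂ minimizes (1/(nT))‖Xβ − y‖² + 2λ‖β‖_{2,1} and suppose (1/(nT))‖XᵀW‖_{2,∞} ≤ λ/2. Then for every β ∈ ℝ^{MT}: (1/(nT))‖X(β̂ − β*)‖² + λ‖β̂ − β‖_{2,1} ≤ (1/(nT))‖X(β − β*)‖² + 4λ Σ_{j ∈ J(β)} ‖β̂^j − β^j‖, where J(β) = {j : β^j ≠ 0}. -/

import Mathlib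

open scoped BigOperators Classical
open Matrix

noncomputable def blk {M T : ℕ} (β : Fin M × Fin T → ℝ) (j : Fin M) :
    EuclideanSpace ℝ (Fin T) := WithLp.toLp 2 (fun t => β (j, t))

noncomputable def norm21 {M T : ℕ} (β : Fin M × Fin T → ℝ) : ℝ := ∑ j, ‖blk β j‖

noncomputable def norm2inf {M T : ℕ} (β : Fin M × Fin T → ℝ) : ℝ :=
  ‖(fun j => ‖blk β j‖ : Fin M → ℝ)‖

lemma blk_sub {M T : ℕ} (a b : Fin M × Fin T → ℝ) (j : Fin M) :
    blk (a - b) j = blk a j - blk b j := by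
  ext t; simp [blk]

lemma norm21_nonneg {M T : ℕ} (β : Fin M × Fin T → ℝ) : 0 ≤ norm21 β :=
  Finset.sum_nonneg fun j _ => norm_nonneg _

lemma blk_norm_le {M T : ℕ} (u : Fin M × Fin T → ℝ) (j : Fin M) :
    ‖blk u j‖ ≤ norm2inf u := by
  have h := norm_le_pi_norm (fun j => ‖blk u j‖ : Fin M → ℝ) j
  simpa [norm2inf, Real.norm_eq_abs, abs_of_nonneg (norm_nonneg (blk u j))] using h

lemma inner_blk {M T : ℕ} (u v : Fin M × Fin T → ℝ) (j : Fin M) :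
    ∑ t, u (j, t) * v (j, t) ≤ ‖blk u j‖ * ‖blk v j‖ := by
  have h := real_inner_le_norm (blk u j) (blk v j)
  rw [PiLp.inner_apply] at h
  simpa [blk, RCLike.inner_apply, conj_trivial, mul_comm] using h

lemma dual_bound {M T n' : ℕ} (X : Matrix (Fin n') (Fin M × Fin T) ℝ)
    (W : Fin n' → ℝ) (d : Fin M × Fin T → ℝ) :
    ∑ i, W i * X.mulVec d i ≤ norm2inf (Xᵀ.mulVec W) * norm21 d := by
  have key : ∑ i, W i * X.mulVec d i = ∑ p, (Xᵀ.mulVec W) p * d p := by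
    simp only [Matrix.mulVec, dotProduct, Matrix.transpose_apply,
      Finset.mul_sum, Finset.sum_mul]
    rw [Finset.sum_comm]
    apply Finset.sum_congr rfl
    intro p _
    apply Finset.sum_congr rfl
    intro i _
    ring
  rw [key, Fintype.sum_prod_type]
  calc ∑ j, ∑ t, (Xᵀ.mulVec W) (j, t) * d (j, t)
      ≤ ∑ j, ‖blk (Xᵀ.mulVec W) j‖ * ‖blk d j‖ :=
        Finset.sum_le_sum fun j _ => inner_blk _ _ j
    _ ≤ ∑ j, norm2inf (Xᵀ.mulVec W) * ‖blk d j‖ :=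
        Finset.sum_le_sum fun j _ =>
          mul_le_mul_of_nonneg_right (blk_norm_le _ j) (norm_nonneg _)
    _ = norm2inf (Xᵀ.mulVec W) * norm21 d := by
        rw [norm21, Finset.mul_sum]

theorem stmt_10 (n T M : ℕ) (hn : 0 < n) (hT : 0 < T)
    (X : Matrix (Fin (n * T)) (Fin M × Fin T) ℝ)
    (βstar βhat : Fin M × Fin T → ℝ) (W : Fin (n * T) → ℝ)
    (y : Fin (n * T) → ℝ) (hy : y = X.mulVec βstar + W)
    (lam : ℝ) (hlam : 0 < lam)
    (hmin : ∀ β : Fin M × Fin T → ℝ,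
        (1 / (n * T : ℝ)) * ∑ i, (X.mulVec βhat i - y i) ^ 2 +
          2 * lam * norm21 βhat ≤
        (1 / (n * T : ℝ)) * ∑ i, (X.mulVec β i - y i) ^ 2 + 2 * lam * norm21 β)
    (hW : (1 / (n * T : ℝ)) * norm2inf (Xᵀ.mulVec W) ≤ lam / 2) :
    ∀ β : Fin M × Fin T → ℝ,
      (1 / (n * T : ℝ)) * ∑ i, (X.mulVec βhat i - X.mulVec βstar i) ^ 2 +
          lam * norm21 (βhat - β) ≤
        (1 / (n * T : ℝ)) * ∑ i, (X.mulVec β i - X.mulVec βstar i) ^ 2 +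
          4 * lam * ∑ j ∈ Finset.univ.filter (fun j => blk β j ≠ 0),
            ‖blk βhat j - blk β j‖ := by
  intro β
  set c : ℝ := 1 / (n * T : ℝ) with hc_def
  have hnT : (0:ℝ) < (n * T : ℝ) := by
    have := Nat.mul_pos hn hT
    exact_mod_cast this
  have hc : 0 < c := by positivity
  -- expansion of the squared loss
  have hE : ∀ v : Fin M × Fin T → ℝ,
      ∑ i, (X.mulVec v i - y i) ^ 2 =
        ∑ i, (X.mulVec v i - X.mulVec βstar i) ^ 2 -
        2 * ∑ i, W i * (X.mulVec v i - X.mulVec βstar i) + ∑ i, W i ^ 2 := by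
    intro v
    subst hy
    rw [Finset.mul_sum, ← Finset.sum_sub_distrib, ← Finset.sum_add_distrib]
    apply Finset.sum_congr rfl
    intro i _
    simp only [Pi.add_apply]
    ring
  have hmb := hmin β
  rw [hE βhat, hE β] at hmb
  -- abbreviations
  set A := ∑ i, (X.mulVec βhat i - X.mulVec βstar i) ^ 2 with hA
  set B := ∑ i, (X.mulVec β i - X.mulVec βstar i) ^ 2 with hB
  set Sh := ∑ i, W i * (X.mulVec βhat i - X.mulVec βstar i) with hSh
  set Sb := ∑ i, W i * (X.mulVec β i - X.mulVec βstar i) with hSb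
  set Nd := norm21 (βhat - β) with hNd
  -- dual bound
  have hdual : Sh - Sb ≤ norm2inf (Xᵀ.mulVec W) * Nd := by
    have h1 : Sh - Sb = ∑ i, W i * (X.mulVec (βhat - β)) i := by
      rw [hSh, hSb, ← Finset.sum_sub_distrib]
      apply Finset.sum_congr rfl
      intro i _
      rw [Matrix.mulVec_sub]
      simp only [Pi.sub_apply]
      ring
    rw [h1]
    exact dual_bound X W (βhat - β)
  have hNd0 : 0 ≤ Nd := norm21_nonneg _
  have hstep : c * (Sh - Sb) ≤ (lam / 2) * Nd := by
    calc c * (Sh - Sb) ≤ c * (norm2inf (Xᵀ.mulVec W) * Nd) := by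
          apply mul_le_mul_of_nonneg_left hdual (le_of_lt hc)
      _ = (c * norm2inf (Xᵀ.mulVec W)) * Nd := by ring
      _ ≤ (lam / 2) * Nd := mul_le_mul_of_nonneg_right hW hNd0
  -- blockwise bound
  have hblocks : 2 * Nd + 2 * norm21 β - 2 * norm21 βhat ≤
      4 * ∑ j ∈ Finset.univ.filter (fun j => blk β j ≠ 0), ‖blk βhat j - blk β j‖ := by
    have hNd' : Nd = ∑ j, ‖blk βhat j - blk β j‖ := by
      rw [hNd, norm21]
      exact Finset.sum_congr rfl fun j _ => by rw [blk_sub]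
    have hsum : 2 * Nd + 2 * norm21 β - 2 * norm21 βhat =
        ∑ j, (2 * ‖blk βhat j - blk β j‖ + 2 * ‖blk β j‖ - 2 * ‖blk βhat j‖) := by
      rw [hNd', norm21, norm21, Finset.mul_sum, Finset.mul_sum, Finset.mul_sum,
        ← Finset.sum_add_distrib, ← Finset.sum_sub_distrib]
    rw [hsum]
    rw [← Finset.sum_filter_add_sum_filter_not Finset.univ (fun j => blk β j ≠ 0)]
    have h2 : ∑ j ∈ Finset.univ.filter (fun j => ¬ blk β j ≠ 0),
        (2 * ‖blk βhat j - blk β j‖ + 2 * ‖blk β j‖ - 2 * ‖blk βhat j‖) = 0 := by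
      apply Finset.sum_eq_zero
      intro j hj
      simp only [Finset.mem_filter, not_not] at hj
      rw [hj.2]
      simp
    rw [h2, add_zero, Finset.mul_sum]
    apply Finset.sum_le_sum
    intro j hj
    have htri : ‖blk β j‖ - ‖blk βhat j‖ ≤ ‖blk βhat j - blk β j‖ := by
      have := norm_sub_norm_le (blk β j) (blk βhat j)
      have h3 : ‖blk β j - blk βhat j‖ = ‖blk βhat j - blk β j‖ := norm_sub_rev _ _
      linarith
    linarith
  -- combine
  have hmul : lam * (2 * Nd + 2 * norm21 β - 2 * norm21 βhat) ≤
      lam * (4 * ∑ j ∈ Finset.univ.filter (fun j => blk β j ≠ 0), ‖blk βhat j - blk β j‖) :=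
    mul_le_mul_of_nonneg_left hblocks (le_of_lt hlam)
  nlinarith [hmb, hstep, hmul]
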